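/- For every positive integer n, the polynomial D_n(t) = t^9 - (n+3)t^8 - (n-4)t^7 + (2n-8)t^6 + (2n+8)t^5 + (2n-8)t^4 - (2n-11)t^3 + (3n-5)t^2 + (3n+4)t - 4(n+1) has no roots on the circle |z| = 2 in the complex plane. -/

import Mathlib

open Polynomial

/-- The denominator polynomial `D_n(t)`, over `ℂ`. -/
noncomputable def DpolyC (n : ℕ) : Polynomial ℂ :=
  X ^ 9 - C ((n : ℂ) + 3) * X ^ 8 - C ((n : ℂ) - 4) * X ^ 7 + C (2 * (n : ℂ) - 8) * X ^ 6
    + C (2 * (n : ℂ) + 8) * X ^ 5 + C (2 * (n : ℂ) - 8) * X ^ 4 - C (2 * (n : ℂ) - 11) * X ^ 3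
    + C (3 * (n : ℂ) - 5) * X ^ 2 + C (3 * (n : ℂ) + 4) * X - C (4 * ((n : ℂ) + 1))

lemma Gpos_aux1 (s : ℝ) (h1 : -4 ≤ s) (h2 : s ≤ 4) :
    0 ≤ 362440 + 113008 * s - 37896 * s ^ 2 - 12800 * s ^ 3 + 5280 * s ^ 4 + 640 * s ^ 5 - 392 * s ^ 6 - 16 * s ^ 7 + 8 * s ^ 8 := by
  have ha : (0:ℝ) ≤ 4 - s := by linarith
  have hb : (0:ℝ) ≤ 4 + s := by linarith
  have e : (8589934592 : ℝ) * (362440 + 113008 * s - 37896 * s ^ 2 - 12800 * s ^ 3 + 5280 * s ^ 4 + 640 * s ^ 5 - 392 * s ^ 6 - 16 * s ^ 7 + 8 * s ^ 8) =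
      6561 * (4 + s) ^ 12 + 531036 * (4 - s) * (4 + s) ^ 11 + 3753522 * (4 - s) ^ 2 * (4 + s) ^ 10 + 10558092 * (4 - s) ^ 3 * (4 + s) ^ 9 + 26625823 * (4 - s) ^ 4 * (4 + s) ^ 8 + 53785656 * (4 - s) ^ 5 * (4 + s) ^ 7 + 58808316 * (4 - s) ^ 6 * (4 + s) ^ 6 + 26908280 * (4 - s) ^ 7 * (4 + s) ^ 5 + 1958383 * (4 - s) ^ 8 * (4 + s) ^ 4 + 830572 * (4 - s) ^ 9 * (4 + s) ^ 3 + 1631986 * (4 - s) ^ 10 * (4 + s) ^ 2 + 171004 * (4 - s) ^ 11 * (4 + s) + 49 * (4 - s) ^ 12 := by ring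
  nlinarith [pow_nonneg hb 12,
    mul_nonneg (pow_nonneg ha 1) (pow_nonneg hb 11),
    mul_nonneg (pow_nonneg ha 2) (pow_nonneg hb 10),
    mul_nonneg (pow_nonneg ha 3) (pow_nonneg hb 9),
    mul_nonneg (pow_nonneg ha 4) (pow_nonneg hb 8),
    mul_nonneg (pow_nonneg ha 5) (pow_nonneg hb 7),
    mul_nonneg (pow_nonneg ha 6) (pow_nonneg hb 6),
    mul_nonneg (pow_nonneg ha 7) (pow_nonneg hb 5),
    mul_nonneg (pow_nonneg ha 8) (pow_nonneg hb 4),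
    mul_nonneg (pow_nonneg ha 9) (pow_nonneg hb 3),
    mul_nonneg (pow_nonneg ha 10) (pow_nonneg hb 2),
    mul_nonneg (pow_nonneg ha 11) (pow_nonneg hb 1),
    pow_nonneg ha 12]

lemma Gpos_aux2 (s : ℝ) (h1 : -4 ≤ s) (h2 : s ≤ 4) :
    (50000 : ℝ) ≤ (346176 + 7352 * s - 79924 * s ^ 2 - 2596 * s ^ 3 + 13176 * s ^ 4 - 920 * s ^ 5 - 1032 * s ^ 6 + 128 * s ^ 7 + 28 * s ^ 8 - 4 * s ^ 9) + (362440 + 113008 * s - 37896 * s ^ 2 - 12800 * s ^ 3 + 5280 * s ^ 4 + 640 * s ^ 5 - 392 * s ^ 6 - 16 * s ^ 7 + 8 * s ^ 8) := by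
  have ha : (0:ℝ) ≤ 4 - s := by linarith
  have hb : (0:ℝ) ≤ 4 + s := by linarith
  have e : (4398046511104 : ℝ) * (((346176 + 7352 * s - 79924 * s ^ 2 - 2596 * s ^ 3 + 13176 * s ^ 4 - 920 * s ^ 5 - 1032 * s ^ 6 + 128 * s ^ 7 + 28 * s ^ 8 - 4 * s ^ 9) + (362440 + 113008 * s - 37896 * s ^ 2 - 12800 * s ^ 3 + 5280 * s ^ 4 + 640 * s ^ 5 - 392 * s ^ 6 - 16 * s ^ 7 + 8 * s ^ 8)) - 50000) =
      2579 * (4 + s) ^ 15 + 412053 * (4 - s) * (4 + s) ^ 14 + 5496059 * (4 - s) ^ 2 * (4 + s) ^ 13 + 28467597 * (4 - s) ^ 3 * (4 + s) ^ 12 + 85497519 * (4 - s) ^ 4 * (4 + s) ^ 11 + 215754969 * (4 - s) ^ 5 * (4 + s) ^ 10 + 480335559 * (4 - s) ^ 6 * (4 + s) ^ 9 + 754934945 * (4 - s) ^ 7 * (4 + s) ^ 8 + 709991641 * (4 - s) ^ 8 * (4 + s) ^ 7 + 341059487 * (4 - s) ^ 9 * (4 + s) ^ 6 + 51101617 * (4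 - s) ^ 10 * (4 + s) ^ 5 + 1072231 * (4 - s) ^ 11 * (4 + s) ^ 4 + 16242981 * (4 - s) ^ 12 * (4 + s) ^ 3 + 7140659 * (4 - s) ^ 13 * (4 + s) ^ 2 + 177613 * (4 - s) ^ 14 * (4 + s) + 3627 * (4 - s) ^ 15 := by ring
  nlinarith [pow_nonneg hb 15,
    mul_nonneg (pow_nonneg ha 1) (pow_nonneg hb 14),
    mul_nonneg (pow_nonneg ha 2) (pow_nonneg hb 13),
    mul_nonneg (pow_nonneg ha 3) (pow_nonneg hb 12),
    mul_nonneg (pow_nonneg ha 4) (pow_nonneg hb 11),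
    mul_nonneg (pow_nonneg ha 5) (pow_nonneg hb 10),
    mul_nonneg (pow_nonneg ha 6) (pow_nonneg hb 9),
    mul_nonneg (pow_nonneg ha 7) (pow_nonneg hb 8),
    mul_nonneg (pow_nonneg ha 8) (pow_nonneg hb 7),
    mul_nonneg (pow_nonneg ha 9) (pow_nonneg hb 6),
    mul_nonneg (pow_nonneg ha 10) (pow_nonneg hb 5),
    mul_nonneg (pow_nonneg ha 11) (pow_nonneg hb 4),
    mul_nonneg (pow_nonneg ha 12) (pow_nonneg hb 3),
    mul_nonneg (pow_nonneg ha 13) (pow_nonneg hb 2),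
    mul_nonneg (pow_nonneg ha 14) (pow_nonneg hb 1),
    pow_nonneg ha 15]

lemma Gpos (s t : ℝ) (h1 : -4 ≤ s) (h2 : s ≤ 4) (ht : 1 ≤ t) :
    0 < (346176 + 7352 * s - 79924 * s ^ 2 - 2596 * s ^ 3 + 13176 * s ^ 4 - 920 * s ^ 5 - 1032 * s ^ 6 + 128 * s ^ 7 + 28 * s ^ 8 - 4 * s ^ 9) + t * (362440 + 113008 * s - 37896 * s ^ 2 - 12800 * s ^ 3 + 5280 * s ^ 4 + 640 * s ^ 5 - 392 * s ^ 6 - 16 * s ^ 7 + 8 * s ^ 8) := by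
  have hG1 := Gpos_aux1 s h1 h2
  have hH := Gpos_aux2 s h1 h2
  nlinarith [mul_nonneg (sub_nonneg.mpr ht) hG1]

theorem stmt_8 (n : ℕ) (hn : 0 < n) (z : ℂ) (hz : ‖z‖ = 2) :
    ¬ (DpolyC n).IsRoot z := by
  intro hroot
  have hA : z ^ 9 - ((n : ℂ) + 3) * z ^ 8 - ((n : ℂ) - 4) * z ^ 7 + (2 * (n : ℂ) - 8) * z ^ 6 + (2 * (n : ℂ) + 8) * z ^ 5 + (2 * (n : ℂ) - 8) * z ^ 4 - (2 * (n : ℂ) - 11) * z ^ 3 + (3 * (n : ℂ) - 5) * z ^ 2 + (3 * (n : ℂ) + 4) * z - 4 * ((n : ℂ) + 1) = 0 := by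
    have h : eval z (DpolyC n) = 0 := hroot
    simp only [DpolyC, eval_add, eval_sub, eval_mul, eval_pow, eval_X, eval_C] at h
    linear_combination h
  set w := (starRingEnd ℂ) z with hw
  have hAc : w ^ 9 - ((n : ℂ) + 3) * w ^ 8 - ((n : ℂ) - 4) * w ^ 7 + (2 * (n : ℂ) - 8) * w ^ 6 + (2 * (n : ℂ) + 8) * w ^ 5 + (2 * (n : ℂ) - 8) * w ^ 4 - (2 * (n : ℂ) - 11) * w ^ 3 + (3 * (n : ℂ) - 5) * w ^ 2 + (3 * (n : ℂ) + 4) * w - 4 * ((n : ℂ) + 1) = 0 := by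
    have h2 := congrArg (starRingEnd ℂ) hA
    simp only [map_sub, map_add, map_mul, map_pow, map_ofNat, map_one, map_zero,
      Complex.conj_natCast] at h2
    linear_combination h2
  have hzw : z * w = 4 := by
    rw [hw, Complex.mul_conj, Complex.normSq_eq_norm_sq, hz]
    norm_num
  have hs : z + w = ((2 * z.re : ℝ) : ℂ) := by
    rw [hw, Complex.add_conj]
  have hkey : (346176 + 7352 * (z + w) - 79924 * (z + w) ^ 2 - 2596 * (z + w) ^ 3 + 13176 * (z + w) ^ 4 - 920 * (z + w) ^ 5 - 1032 * (z + w) ^ 6 + 128 * (z + w) ^ 7 + 28 * (z + w) ^ 8 - 4 * (z + w) ^ 9) + (n : ℂ) * (362440 + 113008 * (z + w) - 37896 * (z + w) ^ 2 - 12800 * (z + w) ^ 3 + 5280 * (z + w) ^ 4 + 640 * (z + w) ^ 5 - 392 * (z + w) ^ 6 - 16 * (z + w) ^ 7 + 8 * (z + w) ^ 8) = 0 := by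
    linear_combination
      (-w ^ 8 - w ^ 7 + 2 * w ^ 6 + 2 * w ^ 5 + 2 * w ^ 4 - 2 * w ^ 3 + 3 * w ^ 2 + 3 * w - 4) * hA + (-z ^ 8 - z ^ 7 + 2 * z ^ 6 + 2 * z ^ 5 + 2 * z ^ 4 - 2 * z ^ 3 + 3 * z ^ 2 + 3 * z - 4) * hAc + (-(86536 + 90602 * (n : ℂ) + 21632 * (z * w) + 22634 * (z * w) * (n : ℂ) + 5416 * (z * w) ^ 2 + 5656 * (z * w) ^ 2 * (n : ℂ) + 1344 * (z * w) ^ 3 + 1404 * (z * w) ^ 3 * (n : ℂ) + 360 * (z * w) ^ 4 + 332 * (z * w) ^ 4 * (n : ℂ) + 72 * (z * w) ^ 5 + 80 * (z * w) ^ 5 * (n : ℂ) + 24 * (z * w) ^ 6 + 18 * (z * w) ^ 6 * (n : ℂ) + 8 * (z * w) ^ 7 + 2 * (z * w) ^ 7 * (n : ℂ) + 1845 * (z + w) + 28258 * (z + w) * (n : ℂ) + 435 * (z + w) * (z * w) + 7072 * (z + w) * (z * w) * (n : ℂ) + 136 * (z + w) * (z * w) ^ 2 + 1800 * (z + w) *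 (z * w) ^ 2 * (n : ℂ) + 34 * (z + w) * (z * w) ^ 3 + 460 * (z + w) * (z * w) ^ 3 * (n : ℂ) + 2 * (z + w) * (z * w) ^ 4 + 104 * (z + w) * (z * w) ^ 4 * (n : ℂ) + 24 * (z + w) * (z * w) ^ 5 + 16 * (z + w) * (z * w) ^ 5 * (n : ℂ) - 11 * (z + w) * (z * w) ^ 6 + 2 * (z + w) * (z * w) ^ 6 * (n : ℂ) - 1 * (z + w) * (z * w) ^ 7 - 19983 * (z + w) ^ 2 - 9468 * (z + w) ^ 2 * (n : ℂ) - 4978 * (z + w) ^ 2 * (z * w) - 2380 * (z + w) ^ 2 * (z * w) * (n : ℂ) - 1258 * (z + w) ^ 2 * (z * w) ^ 2 - 550 * (z + w) ^ 2 * (z * w) ^ 2 * (n : ℂ) - 304 * (z + w) ^ 2 * (z * w) ^ 3 - 78 * (z + w) ^ 2 * (z * w) ^ 3 * (n : ℂ) - 66 * (z + w) ^ 2 * (z * w) ^ 4 - 4 * (z + w) ^ 2 * (z * w) ^ 4 * (n : ℂ) - 10 * (z + w) ^ 2 * (z * w) ^ 5 - 4 * (z + w) ^ 2 * (z * w) ^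 5 * (n : ℂ) - 1 * (z + w) ^ 2 * (z * w) ^ 6 - 640 * (z + w) ^ 3 - 3204 * (z + w) ^ 3 * (n : ℂ) - 206 * (z + w) ^ 3 * (z * w) - 824 * (z + w) ^ 3 * (z * w) * (n : ℂ) - 33 * (z + w) ^ 3 * (z * w) ^ 2 - 222 * (z + w) ^ 3 * (z * w) ^ 2 * (n : ℂ) + 19 * (z + w) ^ 3 * (z * w) ^ 3 - 40 * (z + w) ^ 3 * (z * w) ^ 3 * (n : ℂ) - 16 * (z + w) ^ 3 * (z * w) ^ 4 - 4 * (z + w) ^ 3 * (z * w) ^ 4 * (n : ℂ) + 2 * (z + w) ^ 3 * (z * w) ^ 5 + 3288 * (z + w) ^ 4 + 1324 * (z + w) ^ 4 * (n : ℂ) + 850 * (z + w) ^ 4 * (z * w) + 304 * (z + w) ^ 4 * (z * w) * (n : ℂ) + 153 * (z + w) ^ 4 * (z * w) ^ 2 + 24 * (z + w) ^ 4 * (z * w) ^ 2 * (n : ℂ) + 22 * (z + w) ^ 4 * (z * w) ^ 3 - 4 * (z + w) ^ 4 * (z * w) ^ 3 * (n : ℂ) + 2 * (z + w) ^ 4 *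 (z * w) ^ 4 - 220 * (z + w) ^ 5 + 164 * (z + w) ^ 5 * (n : ℂ) - 72 * (z + w) ^ 5 * (z * w) + 52 * (z + w) ^ 5 * (z * w) * (n : ℂ) - 18 * (z + w) ^ 5 * (z * w) ^ 2 + 4 * (z + w) ^ 5 * (z * w) ^ 2 * (n : ℂ) + 2 * (z + w) ^ 5 * (z * w) ^ 3 - 264 * (z + w) ^ 6 - 94 * (z + w) ^ 6 * (n : ℂ) - 36 * (z + w) ^ 6 * (z * w) - 6 * (z + w) ^ 6 * (z * w) * (n : ℂ) - 2 * (z + w) ^ 6 * (z * w) ^ 2 + 35 * (z + w) ^ 7 - 6 * (z + w) ^ 7 * (n : ℂ) + 3 * (z + w) ^ 7 * (z * w) + 3 * (z + w) ^ 8)) * hzw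
  rw [hs] at hkey
  have hreal : (346176 + 7352 * (2 * z.re) - 79924 * (2 * z.re) ^ 2 - 2596 * (2 * z.re) ^ 3 + 13176 * (2 * z.re) ^ 4 - 920 * (2 * z.re) ^ 5 - 1032 * (2 * z.re) ^ 6 + 128 * (2 * z.re) ^ 7 + 28 * (2 * z.re) ^ 8 - 4 * (2 * z.re) ^ 9) + (n : ℝ) * (362440 + 113008 * (2 * z.re) - 37896 * (2 * z.re) ^ 2 - 12800 * (2 * z.re) ^ 3 + 5280 * (2 * z.re) ^ 4 + 640 * (2 * z.re) ^ 5 - 392 * (2 * z.re) ^ 6 - 16 * (2 * z.re) ^ 7 + 8 * (2 * z.re) ^ 8) = 0 := by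
    exact_mod_cast hkey
  have hre : |z.re| ≤ 2 := by
    have := Complex.abs_re_le_norm z
    rwa [hz] at this
  have hx1 : -4 ≤ 2 * z.re := by
    have := abs_le.mp hre
    linarith [this.1]
  have hx2 : 2 * z.re ≤ 4 := by
    have := abs_le.mp hre
    linarith [this.2]
  have hn1 : (1 : ℝ) ≤ (n : ℝ) := by exact_mod_cast hn
  have hpos := Gpos (2 * z.re) (n : ℝ) hx1 hx2 hn1
  linarith
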